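/- Let X, V, W, Y be real Banach spaces, let L : X → W and C : V → Y be continuous linear maps, and let Â : V → W be Fréchet differentiable at points u, ũ ∈ V. Define 𝐅 : X × V → W × Y by 𝐅(x,v) = (Â(v) + L x, C v), so that for any x ∈ X the Fréchet derivative of 𝐅 at (x,u) is the continuous linear map (h,w) ↦ (L h + Â'(u) w, C w). Suppose there is a continuous linear map M : Y → W with M ∘ C = Â'(ũ) − Â'(u) (i.e., the difference of derivatives factors through the observation operator C). Then, with R : W × Y → W × Y the continuous linear map R(w,y) = (w + M y, y), one has 𝐅'(x̃, ũ) = R ∘ 𝐅'(x, u) for all x, x̃ ∈ X; moreover, equipping W × Y with the supremum norm, ‖R − Id‖ = ‖M‖. -/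

import Mathlib

/-- Lemma 5.1(a): all-at-once adjoint range invariance for the affine-in-parameter
model `A(x,u) = Â(u) + L x` with linear observation `C`.  If the difference of the
derivatives of `Â` at `ũ` and `u` factors through `C` via a bounded operator `M`,
then `𝐅'(x̃,ũ) = R ∘ 𝐅'(x,u)` with `R(w,y) = (w + M y, y)`, and `‖R − Id‖ = ‖M‖`
(products carrying the supremum norm). -/
theorem allAtOnce_adjoint_range_invariance
    {X V W Y : Type*}
    [NormedAddCommGroup X] [NormedSpace ℝ X] [CompleteSpace X]
    [NormedAddCommGroup V] [NormedSpace ℝ V] [CompleteSpace V]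
    [NormedAddCommGroup W] [NormedSpace ℝ W] [CompleteSpace W]
    [NormedAddCommGroup Y] [NormedSpace ℝ Y] [CompleteSpace Y]
    (L : X →L[ℝ] W) (C : V →L[ℝ] Y) (Ahat : V → W)
    (u utilde : V) (A' Atilde' : V →L[ℝ] W)
    (hu : HasFDerivAt Ahat A' u) (hutilde : HasFDerivAt Ahat Atilde' utilde)
    (F : X × V → W × Y) (hF : ∀ p : X × V, F p = (Ahat p.2 + L p.1, C p.2))
    (DF : (V →L[ℝ] W) → (X × V →L[ℝ] W × Y))
    (hDF : ∀ G : V →L[ℝ] W,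
      DF G = (L.comp (ContinuousLinearMap.fst ℝ X V)
                + G.comp (ContinuousLinearMap.snd ℝ X V)).prod
             (C.comp (ContinuousLinearMap.snd ℝ X V)))
    (M : Y →L[ℝ] W) (hM : M.comp C = Atilde' - A')
    (R : (W × Y) →L[ℝ] (W × Y))
    (hR : R = (ContinuousLinearMap.fst ℝ W Y
                + M.comp (ContinuousLinearMap.snd ℝ W Y)).prod
              (ContinuousLinearMap.snd ℝ W Y)) :
    (∀ x : X, HasFDerivAt F (DF A') (x, u)) ∧
    (∀ xtilde : X, HasFDerivAt F (DF Atilde') (xtilde, utilde)) ∧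
    DF Atilde' = R.comp (DF A') ∧
    ‖R - ContinuousLinearMap.id ℝ (W × Y)‖ = ‖M‖ := by
  have hFeq : F = fun p : X × V => (Ahat p.2 + L p.1, C p.2) := funext hF
  have key : ∀ (G : V →L[ℝ] W) (v : V) (x : X), HasFDerivAt Ahat G v →
      HasFDerivAt F (DF G) (x, v) := by
    intro G v x hG
    rw [hFeq, hDF]
    have h1 : HasFDerivAt (fun p : X × V => Ahat p.2 + L p.1)
        (L.comp (ContinuousLinearMap.fst ℝ X V)
          + G.comp (ContinuousLinearMap.snd ℝ X V)) (x, v) := by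
      have hA : HasFDerivAt (fun p : X × V => Ahat p.2)
          (G.comp (ContinuousLinearMap.snd ℝ X V)) (x, v) :=
        hG.comp (x, v) (hasFDerivAt_snd)
      have hL : HasFDerivAt (fun p : X × V => L p.1)
          (L.comp (ContinuousLinearMap.fst ℝ X V)) (x, v) :=
        (L.hasFDerivAt).comp (x, v) (hasFDerivAt_fst)
      exact (hA.add hL).congr_fderiv (add_comm _ _)
    have h2 : HasFDerivAt (fun p : X × V => C p.2)
        (C.comp (ContinuousLinearMap.snd ℝ X V)) (x, v) :=
      (C.hasFDerivAt).comp (x, v) (hasFDerivAt_snd)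
    exact h1.prodMk h2
  refine ⟨fun x => key A' u x hu, fun x => key Atilde' utilde x hutilde, ?_, ?_⟩
  · have hAt : Atilde' = A' + M.comp C := by rw [hM]; abel
    ext p <;>
      simp [hDF, hR, hAt, ContinuousLinearMap.prod_apply, ContinuousLinearMap.comp_apply,
        add_comm, add_left_comm, add_assoc]
  · have hS : ∀ p : W × Y, (R - ContinuousLinearMap.id ℝ (W × Y)) p = (M p.2, 0) := by
      intro p
      simp [hR, ContinuousLinearMap.sub_apply, Prod.ext_iff]
    refine le_antisymm ?_ ?_
    · refine ContinuousLinearMap.opNorm_le_bound _ (norm_nonneg M) fun p => ?_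
      rw [hS p]
      have : ‖(M p.2, (0 : Y))‖ = ‖M p.2‖ := by
        simp [Prod.norm_def]
      rw [this]
      calc ‖M p.2‖ ≤ ‖M‖ * ‖p.2‖ := M.le_opNorm _
        _ ≤ ‖M‖ * ‖p‖ := by
            exact mul_le_mul_of_nonneg_left (norm_snd_le p) (norm_nonneg M)
    · refine ContinuousLinearMap.opNorm_le_bound _ (norm_nonneg _) fun y => ?_
      have h0 : ‖M y‖ ≤ ‖R - ContinuousLinearMap.id ℝ (W × Y)‖ * ‖((0 : W), y)‖ := by
        have := (R - ContinuousLinearMap.id ℝ (W × Y)).le_opNorm ((0 : W), y)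
        rwa [hS ((0 : W), y), show ‖(M y, (0 : Y))‖ = ‖M y‖ by simp [Prod.norm_def]] at this
      simpa [Prod.norm_def] using h0
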